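/- arXiv:2503.01188 — 2 statements merged into one kernel-verified Lean document; each statement's English description precedes it below -/
import Mathlib

section
/- Let (X, Y) be an admissible balanced pair in a complete and cocomplete abelian category A. Then E-dwX̃ ∩ (E-dwX̃)⊥ = X̃_E: a complex with all terms in X that is right orthogonal (in Ch(A, E)) to all complexes with terms in X is precisely a contractible complex of the form ⊕ Dⁿ(X') with X' ∈ X, and conversely. -/
open CategoryTheory Category Limits ZeroObject

universe v u

namespace Paper

variable {A : Type u} [Category.{v} A] [Abelian A]

/-- Chain complexes over `A` indexed by `ℤ` (homological convention). -/
abbrev Cx (A : Type u) [Category.{v} A] [Abelian A] := ChainComplex A ℤ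

/-- A chain map is null homotopic if it is homotopic to the zero map. -/
def NullHomotopic {X Y : Cx A} (f : X ⟶ Y) : Prop := Nonempty (Homotopy f 0)

/-- A complex is contractible if its identity is null homotopic. -/
def Contractible (X : Cx A) : Prop := Nonempty (Homotopy (𝟙 X) (0 : X ⟶ X))

/-- `Hom_A(X, E)` is exact at degree `n` for every `X ∈ 𝒳`. -/
def RightAcyclicAt (𝒳 : Set A) (E : Cx A) (n : ℤ) : Prop :=
  ∀ ⦃X : A⦄, X ∈ 𝒳 → ∀ g : X ⟶ E.X n, g ≫ E.d n (n - 1) = 0 →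
    ∃ h : X ⟶ E.X (n + 1), h ≫ E.d (n + 1) n = g

/-- The complex `E` is right `𝒳`-acyclic. -/
def RightAcyclic (𝒳 : Set A) (E : Cx A) : Prop := ∀ n : ℤ, RightAcyclicAt 𝒳 E n

/-- `Hom_A(E, Y)` is exact at (cohomological) degree `n` for every `Y ∈ 𝒴`. -/
def LeftAcyclicAt (𝒴 : Set A) (E : Cx A) (n : ℤ) : Prop :=
  ∀ ⦃Y : A⦄, Y ∈ 𝒴 → ∀ g : E.X n ⟶ Y, E.d (n + 1) n ≫ g = 0 →
    ∃ h : E.X (n - 1) ⟶ Y, E.d n (n - 1) ≫ h = g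

/-- The complex `E` is left `𝒴`-acyclic. -/
def LeftAcyclic (𝒴 : Set A) (E : Cx A) : Prop := ∀ n : ℤ, LeftAcyclicAt 𝒴 E n

/-- `f : X ⟶ M` is a right `𝒳`-approximation of `M`. -/
def IsRightApprox (𝒳 : Set A) {X M : A} (f : X ⟶ M) : Prop :=
  ∀ ⦃X' : A⦄, X' ∈ 𝒳 → ∀ g : X' ⟶ M, ∃ h : X' ⟶ X, h ≫ f = g

/-- `f : M ⟶ Y` is a left `𝒴`-approximation of `M`. -/
def IsLeftApprox (𝒴 : Set A) {M Y : A} (f : M ⟶ Y) : Prop :=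
  ∀ ⦃Y' : A⦄, Y' ∈ 𝒴 → ∀ g : M ⟶ Y', ∃ h : Y ⟶ Y', f ≫ h = g

/-- `R` is an augmented `𝒳`-resolution of `M`:  `⋯ → X₁ → X₀ → M → 0`, with the
`𝒳`-objects placed in degrees `≥ 0` and `M` in degree `-1`. -/
def IsAugXRes (𝒳 : Set A) (M : A) (R : Cx A) : Prop :=
  (∀ n : ℤ, 0 ≤ n → R.X n ∈ 𝒳) ∧ (∀ n : ℤ, n < -1 → IsZero (R.X n)) ∧
    Nonempty (R.X (-1) ≅ M)

/-- `R` is an augmented `𝒴`-coresolution of `M`: `0 → M → Y⁰ → Y¹ → ⋯`, with `M` in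
degree `0` and the `𝒴`-objects in degrees `≤ -1`. -/
def IsAugYCores (𝒴 : Set A) (M : A) (R : Cx A) : Prop :=
  (∀ n : ℤ, n ≤ -1 → R.X n ∈ 𝒴) ∧ (∀ n : ℤ, 0 < n → IsZero (R.X n)) ∧
    Nonempty (R.X 0 ≅ M)

/-- A balanced pair `(𝒳, 𝒴)` of (full additive, isomorphism- and summand-closed)
subcategories of `A`. -/
structure BalancedPair (𝒳 𝒴 : Set A) : Prop where
  isoClosedX : ∀ ⦃X X' : A⦄, X ∈ 𝒳 → (X ≅ X') → X' ∈ 𝒳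
  isoClosedY : ∀ ⦃Y Y' : A⦄, Y ∈ 𝒴 → (Y ≅ Y') → Y' ∈ 𝒴
  summandClosedX : ∀ ⦃X S : A⦄, X ∈ 𝒳 → ∀ (s : S ⟶ X) (r : X ⟶ S), s ≫ r = 𝟙 S → S ∈ 𝒳
  summandClosedY : ∀ ⦃Y S : A⦄, Y ∈ 𝒴 → ∀ (s : S ⟶ Y) (r : Y ⟶ S), s ≫ r = 𝟙 S → S ∈ 𝒴
  contravariantlyFinite : ∀ M : A, ∃ X ∈ 𝒳, ∃ f : X ⟶ M, IsRightApprox 𝒳 f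
  covariantlyFinite : ∀ M : A, ∃ Y ∈ 𝒴, ∃ f : M ⟶ Y, IsLeftApprox 𝒴 f
  resolution : ∀ M : A, ∃ R : Cx A, IsAugXRes 𝒳 M R ∧ RightAcyclic 𝒳 R ∧ LeftAcyclic 𝒴 R
  coresolution : ∀ M : A, ∃ R : Cx A, IsAugYCores 𝒴 M R ∧ RightAcyclic 𝒳 R ∧ LeftAcyclic 𝒴 R

/-- The balanced pair `(𝒳, 𝒴)` is admissible: every right `𝒳`-approximation is epic and
every left `𝒴`-approximation is monic. -/
def Admissible (𝒳 𝒴 : Set A) : Prop :=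
  (∀ ⦃X M : A⦄, X ∈ 𝒳 → ∀ f : X ⟶ M, IsRightApprox 𝒳 f → Epi f) ∧
  (∀ ⦃M Y : A⦄, Y ∈ 𝒴 → ∀ f : M ⟶ Y, IsLeftApprox 𝒴 f → Mono f)

/-- A short exact sequence of `A` belonging to the exact structure `E` induced by `𝒳`:
it is exact and remains exact after applying `Hom_A(X, -)` for every `X ∈ 𝒳`. -/
def EExact (𝒳 : Set A) {D W C : A} (i : D ⟶ W) (p : W ⟶ C) : Prop :=
  ∃ w : i ≫ p = 0, (ShortComplex.mk i p w).ShortExact ∧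
    ∀ ⦃X : A⦄, X ∈ 𝒳 → ∀ g : X ⟶ C, ∃ h : X ⟶ W, h ≫ p = g

/-- A short exact sequence of complexes which is degreewise in `E`. -/
def ChEExact (𝒳 : Set A) {D W C : Cx A} (i : D ⟶ W) (p : W ⟶ C) : Prop :=
  ∀ n : ℤ, EExact 𝒳 (i.f n) (p.f n)

/-- Vanishing of `Ext¹` in the exact category `Ch(A, E)`: every admissible short exact
sequence `0 → D → W → C → 0` in `Ch(A, E)` splits. -/
def Ext1ChVanish (𝒳 : Set A) (C D : Cx A) : Prop :=
  ∀ ⦃W : Cx A⦄ (i : D ⟶ W) (p : W ⟶ C), ChEExact 𝒳 i p → ∃ r : W ⟶ D, i ≫ r = 𝟙 D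

/-- The class `Ẽ` of right `𝒳`-acyclic complexes. -/
def Etilde (𝒳 : Set A) : Set (Cx A) := {E | RightAcyclic 𝒳 E}

/-- The class `E-dw X̃` of complexes with all terms in `𝒳`. -/
def dwX (𝒳 : Set A) : Set (Cx A) := {G | ∀ n : ℤ, G.X n ∈ 𝒳}

/-- The class `E-dg X̃`: complexes with terms in `𝒳` such that every chain map to a right
`𝒳`-acyclic complex is null homotopic. -/
def EdgX (𝒳 : Set A) : Set (Cx A) :=
  {G | (∀ n : ℤ, G.X n ∈ 𝒳) ∧ ∀ E ∈ Etilde 𝒳, ∀ f : G ⟶ E, NullHomotopic f}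

/-- The right `Ext¹`-orthogonal class of `E-dw X̃` in `Ch(A, E)`. -/
def dwPerp (𝒳 : Set A) : Set (Cx A) := {C | ∀ G ∈ dwX 𝒳, Ext1ChVanish 𝒳 G C}

/-- The class `X̃_E` of right `𝒳`-acyclic complexes all of whose cycles lie in `𝒳`. -/
def XtildeE (𝒳 : Set A) : Set (Cx A) :=
  {G | RightAcyclic 𝒳 G ∧ ∀ n : ℤ, kernel (G.d n (n - 1)) ∈ 𝒳}

/-- The disk complex `Dⁿ(M)`: `M` in degrees `n` and `n - 1`, identity differential. -/
noncomputable def disk (M : A) (n : ℤ) : Cx A where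
  X k := if k = n ∨ k = n - 1 then M else 0
  d i j :=
    if h : i = n ∧ j = n - 1 then
      eqToHom (by simp [h.1, h.2])
    else 0
  shape i j hij := by
    try dsimp only
    rw [dif_neg]
    rintro ⟨rfl, rfl⟩
    exact hij (by rw [ComplexShape.down_Rel]; omega)
  d_comp_d' i j k _ _ := by
    try dsimp only
    by_cases h : j = n ∧ k = n - 1
    · rw [dif_neg (by rintro ⟨-, rfl⟩; omega : ¬(i = n ∧ j = n - 1)), zero_comp]
    · rw [dif_neg h, comp_zero]

/-- The shift `Σᵏ C`, with `(Σᵏ C)ₙ = C_{n-k}` and differential `(-1)ᵏ d`. -/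
@[simps] def shiftC (C : Cx A) (k : ℤ) : Cx A where
  X n := C.X (n - k)
  d i j := (k.negOnePow : ℤ) • C.d (i - k) (j - k)
  shape i j hij := by
    try dsimp only
    rw [C.shape, smul_zero]
    simp only [ComplexShape.down_Rel] at *
    omega
  d_comp_d' i j k _ _ := by
    try dsimp only
    rw [Preadditive.zsmul_comp, Preadditive.comp_zsmul, C.d_comp_d, smul_zero, smul_zero]

/-- Acyclicity of a complex. -/
def AcyclicCx (C : Cx A) : Prop := ∀ n : ℤ, C.ExactAt n

/-- Vanishing of the ordinary `Ext¹` in the abelian category `A`. -/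
def Ext1Vanish (X Z : A) : Prop :=
  ∀ ⦃W : A⦄ (i : Z ⟶ W) (p : W ⟶ X) (w : i ≫ p = 0),
    (ShortComplex.mk i p w).ShortExact → ∃ r : W ⟶ Z, i ≫ r = 𝟙 Z

/-- `(𝒻, 𝒞)` is a cotorsion pair in the abelian category `A`. -/
def CotorsionPair (𝒻 𝒞 : Set A) : Prop :=
  (∀ X : A, X ∈ 𝒻 ↔ ∀ Z ∈ 𝒞, Ext1Vanish X Z) ∧
  (∀ Z : A, Z ∈ 𝒞 ↔ ∀ X ∈ 𝒻, Ext1Vanish X Z)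

/-- Completeness of a cotorsion pair. -/
def CompletePair (𝒻 𝒞 : Set A) : Prop :=
  (∀ M : A, ∃ (Z F : A) (i : Z ⟶ F) (p : F ⟶ M) (w : i ≫ p = 0),
      (ShortComplex.mk i p w).ShortExact ∧ F ∈ 𝒻 ∧ Z ∈ 𝒞) ∧
  (∀ M : A, ∃ (Z F : A) (i : M ⟶ Z) (p : Z ⟶ F) (w : i ≫ p = 0),
      (ShortComplex.mk i p w).ShortExact ∧ Z ∈ 𝒞 ∧ F ∈ 𝒻)

/-- Heredity of a cotorsion pair. -/
def HereditaryPair (𝒻 𝒞 : Set A) : Prop :=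
  (∀ ⦃X Y Z : A⦄ (i : X ⟶ Y) (p : Y ⟶ Z) (w : i ≫ p = 0),
      (ShortComplex.mk i p w).ShortExact → Y ∈ 𝒻 → Z ∈ 𝒻 → X ∈ 𝒻) ∧
  (∀ ⦃X Y Z : A⦄ (i : X ⟶ Y) (p : Y ⟶ Z) (w : i ≫ p = 0),
      (ShortComplex.mk i p w).ShortExact → X ∈ 𝒞 → Y ∈ 𝒞 → Z ∈ 𝒞)

/-- A complete hereditary cotorsion triple `(𝒳, 𝒵, 𝒴)`. -/
def CotorsionTriple (𝒳 𝒵 𝒴 : Set A) : Prop :=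
  CotorsionPair 𝒳 𝒵 ∧ CotorsionPair 𝒵 𝒴 ∧
  CompletePair 𝒳 𝒵 ∧ CompletePair 𝒵 𝒴 ∧
  HereditaryPair 𝒳 𝒵 ∧ HereditaryPair 𝒵 𝒴


section Aux
set_option linter.unusedSectionVars false

variable {A : Type u} [Category.{v} A] [Abelian A]

/-- `𝒳` is closed under binary direct sums. -/
lemma BalancedPair.biprod_mem {𝒳 𝒴 : Set A} (hbp : BalancedPair 𝒳 𝒴)
    {X X' : A} (h : X ∈ 𝒳) (h' : X' ∈ 𝒳) : (X ⊞ X') ∈ 𝒳 := by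
  obtain ⟨X'', hX'', f, hf⟩ := hbp.contravariantlyFinite (X ⊞ X')
  obtain ⟨h₁, hh₁⟩ := hf h biprod.inl
  obtain ⟨h₂, hh₂⟩ := hf h' biprod.inr
  refine hbp.summandClosedX hX'' (biprod.desc h₁ h₂) f ?_
  apply biprod.hom_ext' <;> simp [hh₁, hh₂]

lemma d_eqToHom (C : Cx A) {i j j' : ℤ} (h : j = j') :
    C.d i j ≫ eqToHom (congrArg C.X h) = C.d i j' := by subst h; simp

lemma eqToHom_d (C : Cx A) {i i' j : ℤ} (h : i = i') :
    eqToHom (congrArg C.X h) ≫ C.d i' j = C.d i j := by subst h; simp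

lemma cast_trick {X Y : ℤ → A} (g : ∀ n, X n ⟶ Y n) {m m' : ℤ} (h : m = m')
    (e₁ : X m' = X m) (e₂ : Y m = Y m') : eqToHom e₁ ≫ g m ≫ eqToHom e₂ = g m' := by
  subst h; simp

lemma cast_trick' {X Y : ℤ → A} (g : ∀ n, X n ⟶ Y n) {m m' : ℤ} (h : m = m')
    (e₂ : Y m = Y m') : g m ≫ eqToHom e₂ = eqToHom (congrArg X h) ≫ g m' := by
  subst h; simp

/-- The complex `⋯ → Fₙ₊₁ ⊕ Fₙ₊₂ → Fₙ ⊕ Fₙ₊₁ → ⋯` which is the direct sum of the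
disks `Dⁿ(F n)`. -/
noncomputable abbrev sumDisk (F : ℤ → A) : Cx A where
  X n := F n ⊞ F (n + 1)
  d i j := if h : j + 1 = i then
      biprod.fst ≫ eqToHom (congrArg F h.symm) ≫ biprod.inr else 0
  shape i j hij := dif_neg (by simpa using hij)
  d_comp_d' i j k hij hjk := by
    try dsimp only
    rw [dif_pos (by simpa using hij), dif_pos (by simpa using hjk)]
    simp

@[simp] lemma sumDisk_X (F : ℤ → A) (n : ℤ) : (sumDisk F).X n = (F n ⊞ F (n + 1)) := rfl

lemma sumDisk_d (F : ℤ → A) (n : ℤ) :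
    (sumDisk F).d (n + 1) n = biprod.fst ≫ biprod.inr := by
  simp [sumDisk]

end Aux

section DwPerp
set_option linter.unusedSectionVars false

variable {A : Type u} [Category.{v} A] [Abelian A]

/-- Sums of disks lie in the right orthogonal of every class of complexes, with respect
to degreewise `E`-exact sequences. -/
lemma sumDisk_mem_dwPerp (𝒳 : Set A) (F : ℤ → A) : sumDisk F ∈ dwPerp 𝒳 := by
  simp only [dwPerp, Set.mem_setOf_eq]
  intro G' hG' W i p hE
  -- degreewise retraction of `i`
  have rho : ∀ n : ℤ, ∃ ρ : W.X n ⟶ (sumDisk F).X n, i.f n ≫ ρ = 𝟙 _ := by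
    intro n
    obtain ⟨w, hSE, hlift⟩ := hE n
    obtain ⟨s, hs⟩ := hlift (hG' n) (𝟙 (G'.X n))
    haveI : Mono (i.f n) := hSE.mono_f
    have ht : (𝟙 (W.X n) - p.f n ≫ s) ≫ p.f n = 0 := by
      simp [Preadditive.sub_comp, assoc, hs]
    obtain ⟨ρ, hρ⟩ := KernelFork.IsLimit.lift' hSE.exact.fIsKernel _ ht
    replace hρ : ρ ≫ i.f n = 𝟙 (W.X n) - p.f n ≫ s := hρ
    refine ⟨ρ, (cancel_mono (i.f n)).1 ?_⟩
    rw [assoc, hρ]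
    simp [Preadditive.comp_sub, reassoc_of% w]
  choose ρ hρ using rho
  set b : ∀ n : ℤ, W.X n ⟶ F (n + 1) := fun n => ρ n ≫ biprod.snd with hb
  set a : ∀ n : ℤ, W.X n ⟶ F n := fun n =>
    W.d n (n - 1) ≫ b (n - 1) ≫ eqToHom (congrArg F (by omega : n - 1 + 1 = n)) with hadef
  have key : ∀ (k m m' : ℤ) (hm : m = m') (e : F (m + 1) = F (m' + 1)),
      W.d k m ≫ b m ≫ eqToHom e = W.d k m' ≫ b m' := by
    rintro k m m' rfl e; simp
  have ha : ∀ n : ℤ, a (n + 1) = W.d (n + 1) n ≫ b n := fun n =>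
    key (n + 1) (n + 1 - 1) n (by omega) _
  refine ⟨{ f := fun n => biprod.lift (a n) (b n), comm' := ?_ }, ?_⟩
  · intro ii jj hij
    obtain rfl : ii = jj + 1 := ((by simpa using hij) : jj + 1 = ii).symm
    rw [sumDisk_d]
    apply biprod.hom_ext
    · simp [hadef]
    · simp [ha jj]
  · ext n : 1
    dsimp
    apply biprod.hom_ext
    · have hc := i.comm n (n - 1)
      have hd : (sumDisk F).d n (n - 1) =
          biprod.fst ≫ eqToHom (congrArg F (by omega : n = n - 1 + 1)) ≫ biprod.inr :=
        dif_pos (by omega)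
      simp [hadef, hb, reassoc_of% hc, hd, reassoc_of% (hρ (n - 1))]
    · simp [hb, reassoc_of% (hρ n)]

end DwPerp

section CoprodDisk
set_option linter.unusedSectionVars false

variable {A : Type u} [Category.{v} A] [Abelian A] [HasColimits A]

lemma disk_X_eq_self (M : A) (n : ℤ) : (disk M n).X n = M := if_pos (Or.inl rfl)

lemma disk_X_eq_pred (M : A) (n k : ℤ) (h : k = n - 1) : (disk M n).X k = M :=
  if_pos (Or.inr h)

lemma disk_X_isZero (M : A) (n k : ℤ) (h : ¬(k = n ∨ k = n - 1)) :
    IsZero ((disk M n).X k) := by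
  dsimp [disk]
  rw [if_neg h]
  exact isZero_zero A

variable (F : ℤ → A)

/-- The chain map `Dᵐ(F m) ⟶ sumDisk F`. -/
noncomputable def diskToSum (m : ℤ) : disk (F m) m ⟶ sumDisk F where
  f k :=
    if h : k = m then
      eqToHom (by rw [h, disk_X_eq_self]) ≫ biprod.inl
    else if h' : k = m - 1 then
      eqToHom ((disk_X_eq_pred (F m) m k h').trans (congrArg F (by omega))) ≫ biprod.inr
    else 0
  comm' := by
    intro ii n hij
    obtain rfl : ii = n + 1 := ((by simpa using hij) : n + 1 = ii).symm
    rw [sumDisk_d]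
    try dsimp only
    by_cases h1 : m = n + 1
    · subst h1
      rw [dif_pos rfl, dif_neg (by omega), dif_pos (by omega)]
      have hd : (disk (F (n + 1)) (n + 1)).d (n + 1) n =
          eqToHom (by rw [disk_X_eq_self, disk_X_eq_pred (F (n+1)) (n+1) n (by omega)]) :=
        dif_pos ⟨rfl, by omega⟩
      rw [hd]
      simp [eqToHom_trans]
    · by_cases h2 : m = n + 2
      · subst h2
        rw [dif_neg (by omega), dif_pos (by omega)]
        have hd : (disk (F (n + 2)) (n + 2)).d (n + 1) n = 0 := dif_neg (by omega)
        rw [hd]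
        simp
      · rw [dif_neg (by omega), dif_neg (by omega)]
        have hd : (disk (F m) m).d (n + 1) n = 0 := dif_neg (by omega)
        rw [hd]
        simp

/-- The chain map `sumDisk F ⟶ ∐ₘ Dᵐ(F m)`. -/
noncomputable def sumToCoprod : sumDisk F ⟶ ∐ (fun n : ℤ => disk (F n) n) where
  f n := biprod.desc
      (eqToHom (disk_X_eq_self (F n) n).symm ≫ (Sigma.ι (fun n : ℤ => disk (F n) n) n).f n)
      (eqToHom (disk_X_eq_pred (F (n+1)) (n+1) n (by omega)).symm ≫
        (Sigma.ι (fun n : ℤ => disk (F n) n) (n+1)).f n)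
  comm' := by
    intro ii n hij
    obtain rfl : ii = n + 1 := ((by simpa using hij) : n + 1 = ii).symm
    rw [sumDisk_d]
    try dsimp only
    apply biprod.hom_ext'
    · have hc := (Sigma.ι (fun n : ℤ => disk (F n) n) (n+1)).comm (n+1) n
      have hd : (disk (F (n + 1)) (n + 1)).d (n + 1) n =
          eqToHom (by rw [disk_X_eq_self, disk_X_eq_pred (F (n+1)) (n+1) n (by omega)]) :=
        dif_pos ⟨rfl, by omega⟩
      simp [reassoc_of% hc, hd, eqToHom_trans]
    · have hc := (Sigma.ι (fun n : ℤ => disk (F n) n) (n+1+1)).comm (n+1) n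
      have hd : (disk (F (n + 1 + 1)) (n + 1 + 1)).d (n + 1) n = 0 := dif_neg (by omega)
      simp [reassoc_of% hc, hd]

/-- `sumDisk F` realizes the coproduct of the disks. -/
noncomputable def sumDiskIsoCoprod : sumDisk F ≅ ∐ (fun n : ℤ => disk (F n) n) where
  hom := sumToCoprod F
  inv := Sigma.desc (fun m => diskToSum F m)
  hom_inv_id := by
    ext n : 1
    have hcomp : ∀ m : ℤ, (Sigma.ι (fun n : ℤ => disk (F n) n) m).f n ≫
        (Sigma.desc (fun m => diskToSum F m)).f n = (diskToSum F m).f n := by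
      intro m
      rw [← HomologicalComplex.comp_f, Sigma.ι_desc]
    dsimp [sumToCoprod]
    apply biprod.hom_ext'
    · rw [biprod.inl_desc_assoc, assoc, hcomp n]
      dsimp [diskToSum]
      rw [dif_pos rfl]
      simp [eqToHom_trans]
    · rw [biprod.inr_desc_assoc, assoc, hcomp (n+1)]
      dsimp [diskToSum]
      rw [dif_neg (by omega), dif_pos (by omega)]
      simp [eqToHom_trans]
  inv_hom_id := by
    apply colimit.hom_ext
    rintro ⟨m⟩
    rw [← assoc, colimit.ι_desc]
    dsimp
    ext k
    dsimp [diskToSum]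
    by_cases h1 : k = m
    · subst h1
      rw [dif_pos rfl]
      dsimp [sumToCoprod]
      simp [eqToHom_trans]
    · by_cases h2 : k = m - 1
      · obtain rfl : m = k + 1 := by omega
        rw [dif_neg h1, dif_pos (by omega : k = k + 1 - 1)]
        dsimp [sumToCoprod]
        simp [eqToHom_trans]
      · rw [dif_neg h1, dif_neg h2, zero_comp]
        exact ((disk_X_isZero (F m) m k (by tauto)).eq_of_src _ _).symm

end CoprodDisk

section Cone
set_option linter.unusedSectionVars false

variable {A : Type u} [Category.{v} A] [Abelian A]

variable (G : Cx A)

/-- The mapping cone of the identity of `G`. -/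
noncomputable abbrev coneCx : Cx A where
  X n := G.X (n - 1) ⊞ G.X n
  d i j := if h : j + 1 = i then
      biprod.desc
        (biprod.lift (-(G.d (i-1) (j-1))) (eqToHom (congrArg G.X (by omega : i - 1 = j))))
        (biprod.lift 0 (G.d i j))
    else 0
  shape i j hij := dif_neg (by simpa using hij)
  d_comp_d' i j k hij hjk := by
    replace hij : j + 1 = i := by simpa using hij
    replace hjk : k + 1 = j := by simpa using hjk
    try dsimp only
    rw [dif_pos hij, dif_pos hjk]
    apply biprod.hom_ext'
    · rw [biprod.inl_desc_assoc, comp_zero, biprod.lift_desc]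
      apply biprod.hom_ext
      · simp
      · simp [d_eqToHom G (by omega : j - 1 = k), eqToHom_d G (by omega : i - 1 = j)]
    · rw [biprod.inr_desc_assoc, comp_zero, biprod.lift_desc]
      apply biprod.hom_ext <;> simp

/-- The inclusion of `G` into the cone of its identity. -/
noncomputable def coneIn : G ⟶ coneCx G where
  f n := biprod.inr
  comm' := by
    intro i j hij
    replace hij : j + 1 = i := by simpa using hij
    dsimp [coneCx]
    rw [dif_pos hij]
    apply biprod.hom_ext <;> simp

/-- The projection of the cone of the identity onto `ΣG`. -/
noncomputable def coneOut : coneCx G ⟶ shiftC G 1 where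
  f n := biprod.fst
  comm' := by
    intro i j hij
    replace hij : j + 1 = i := by simpa using hij
    dsimp [coneCx, shiftC]
    rw [dif_pos hij]
    apply biprod.hom_ext' <;>
      simp [Int.negOnePow_one, Units.val_neg, Units.val_one, neg_smul, one_smul]

lemma coneCh (𝒳 : Set A) : ChEExact 𝒳 (coneIn G) (coneOut G) := by
  intro n
  refine ⟨by dsimp [coneIn, coneOut]; exact biprod.inr_fst, ?_, ?_⟩
  · exact ShortComplex.Splitting.shortExact
      { r := biprod.snd
        s := biprod.inl
        f_r := by dsimp [coneIn, coneOut]; exact biprod.inr_snd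
        s_g := by dsimp [coneIn, coneOut]; exact biprod.inl_fst
        id := by dsimp [coneIn, coneOut]; rw [add_comm]; exact biprod.total }
  · intro X hX g
    exact ⟨g ≫ biprod.inl, by dsimp [coneOut]; exact (assoc _ _ _).trans ((congrArg (g ≫ ·) biprod.inl_fst).trans (comp_id g))⟩

/-- A complex with terms in `𝒳` lying in the right orthogonal admits a contracting
homotopy. -/
lemma exists_contraction (𝒳 : Set A) (hdw : G ∈ dwX 𝒳) (hperp : G ∈ dwPerp 𝒳) :
    ∃ σ : ∀ n : ℤ, G.X n ⟶ G.X (n + 1),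
      ∀ n : ℤ, σ (n+1) ≫ G.d (n+1+1) (n+1) + G.d (n+1) n ≫ σ n = 𝟙 (G.X (n+1)) := by
  have hsh : shiftC G 1 ∈ dwX 𝒳 := fun n => hdw (n - 1)
  obtain ⟨r, hr⟩ := hperp (shiftC G 1) hsh (coneIn G) (coneOut G) (coneCh G 𝒳)
  refine ⟨fun n => eqToHom (congrArg G.X (by omega : n = n + 1 - 1)) ≫ biprod.inl ≫ r.f (n+1),
    fun n => ?_⟩
  have hcomm := r.comm (n+1+1) (n+1)
  have hd : (coneCx G).d (n+1+1) (n+1) = biprod.desc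
        (biprod.lift (-(G.d (n+1+1-1) (n+1-1)))
          (eqToHom (congrArg G.X (by omega : n+1+1-1 = n+1))))
        (biprod.lift 0 (G.d (n+1+1) (n+1))) := dif_pos (by omega)
  have hid : biprod.inr ≫ r.f (n+1) = 𝟙 (G.X (n+1)) := by
    have := congrArg (fun (q : G ⟶ G) => q.f (n+1)) hr
    simpa [coneIn] using this
  have step : biprod.inl ≫ (coneCx G).d (n+1+1) (n+1) ≫ r.f (n+1) =
      -(G.d (n+1+1-1) (n+1-1) ≫ biprod.inl ≫ r.f (n+1)) +
        eqToHom (congrArg G.X (by omega : n+1+1-1 = n+1)) ≫ (biprod.inr ≫ r.f (n+1)) := by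
    rw [hd, biprod.inl_desc_assoc, biprod.lift_eq]
    simp only [Preadditive.add_comp, Preadditive.neg_comp, assoc]
  have hdd : eqToHom (congrArg G.X (by omega : n+1 = n+1+1-1)) ≫ G.d (n+1+1-1) (n+1-1) =
      G.d (n+1) n ≫ eqToHom (congrArg G.X (by omega : n = n+1-1)) := by
    rw [eqToHom_d G (by omega : n+1 = n+1+1-1), d_eqToHom G (by omega : n = n+1-1)]
  simp only [assoc]
  rw [hcomm, step, hid]
  simp only [Preadditive.comp_add, Preadditive.comp_neg, comp_id, eqToHom_trans,
    eqToHom_refl, ← assoc, hdd]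
  simp only [assoc]
  abel

end Cone

section Decomp
set_option linter.unusedSectionVars false

variable {A : Type u} [Category.{v} A] [Abelian A]

variable (G : Cx A) (σ : ∀ n : ℤ, G.X n ⟶ G.X (n + 1))

/-- The cycles of `G` in degree `n`. -/
noncomputable abbrev cyc (n : ℤ) : A := kernel (G.d n (n - 1))

/-- Inclusion of the cycles. -/
noncomputable def cycι (n : ℤ) : cyc G n ⟶ G.X n := kernel.ι _

lemma cycι_d (n j : ℤ) : cycι G n ≫ G.d n j = 0 := by
  by_cases h : n - 1 = j
  · rw [← d_eqToHom G h, ← assoc]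
    dsimp [cycι]
    rw [kernel.condition, zero_comp]
  · rw [G.shape, comp_zero]
    simp only [ComplexShape.down_Rel]
    omega

/-- `σ ∘ d` as an endomorphism. -/
noncomputable def eMap (n : ℤ) : G.X n ⟶ G.X n := σ n ≫ G.d (n + 1) n

/-- `d ∘ σ` as an endomorphism. -/
noncomputable def fMap (n : ℤ) : G.X n ⟶ G.X n :=
  G.d n (n - 1) ≫ σ (n - 1) ≫ eqToHom (congrArg G.X (by omega : n - 1 + 1 = n))

/-- Projection onto the cycles. -/
noncomputable def cycP (n : ℤ) : G.X n ⟶ cyc G n :=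
  kernel.lift _ (eMap G σ n) (by simp [eMap, assoc])

lemma cycP_ι (n : ℤ) : cycP G σ n ≫ cycι G n = eMap G σ n := kernel.lift_ι _ _ _

/-- The degreewise components of the candidate isomorphism `⊕ D(Z) ⟶ G`. -/
noncomputable def psiF (n : ℤ) : (sumDisk (fun m => cyc G (m - 1))).X n ⟶ G.X n :=
  biprod.desc
    (cycι G (n-1) ≫ σ (n-1) ≫ eqToHom (congrArg G.X (by omega : n - 1 + 1 = n)))
    (eqToHom (congrArg (cyc G) (by omega : n + 1 - 1 = n)) ≫ cycι G n)

/-- Its inverse (up to a unitriangular automorphism). -/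
noncomputable def phiF (n : ℤ) : G.X n ⟶ (sumDisk (fun m => cyc G (m - 1))).X n :=
  biprod.lift (G.d n (n-1) ≫ cycP G σ (n-1))
    (cycP G σ n ≫ eqToHom (congrArg (cyc G) (by omega : n = n + 1 - 1)))

variable {G σ}
variable (hσ : ∀ n : ℤ, σ (n+1) ≫ G.d (n+1+1) (n+1) + G.d (n+1) n ≫ σ n = 𝟙 (G.X (n+1)))

include hσ

lemma ef_total (n : ℤ) : eMap G σ n + fMap G σ n = 𝟙 (G.X n) := by
  obtain ⟨m, rfl⟩ : ∃ m, n = m + 1 := ⟨n - 1, by omega⟩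
  have key : ∀ (k m m' : ℤ) (h : m = m') (e : G.X (m+1) = G.X (m'+1)),
      G.d k m ≫ σ m ≫ eqToHom e = G.d k m' ≫ σ m' := by
    rintro k m m' rfl e; simp
  have h2 : fMap G σ (m+1) = G.d (m+1) m ≫ σ m :=
    key (m+1) (m+1-1) m (by omega) _
  rw [h2]
  exact hσ m

lemma ι_e (n : ℤ) : cycι G n ≫ eMap G σ n = cycι G n := by
  have h0 : cycι G n ≫ fMap G σ n = 0 := by
    dsimp [fMap]
    rw [← assoc, cycι_d, zero_comp]
  calc cycι G n ≫ eMap G σ n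
      = cycι G n ≫ (eMap G σ n + fMap G σ n) := by
        rw [Preadditive.comp_add, h0, add_zero]
    _ = cycι G n := by rw [ef_total hσ, comp_id]

lemma ι_P (n : ℤ) : cycι G n ≫ cycP G σ n = 𝟙 (cyc G n) := by
  haveI : Mono (cycι G n) := by dsimp [cycι]; infer_instance
  rw [← cancel_mono (cycι G n), assoc, cycP_ι, ι_e hσ, id_comp]

lemma d_f (n : ℤ) : G.d n (n-1) ≫ fMap G σ (n-1) = 0 := by
  dsimp [fMap]
  rw [← assoc, ← assoc]
  simp

lemma psiF_comm (n : ℤ) :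
    psiF G σ (n+1) ≫ G.d (n+1) n =
      (sumDisk (fun m => cyc G (m - 1))).d (n+1) n ≫ psiF G σ n := by
  rw [sumDisk_d]
  dsimp only [psiF]
  apply biprod.hom_ext'
  · rw [biprod.inl_desc_assoc]
    have key : ∀ (m m' : ℤ) (h : m = m') (e : G.X (m+1) = G.X (m'+1))
        (e' : cyc G m = cyc G m'),
        cycι G m ≫ σ m ≫ eqToHom e ≫ G.d (m'+1) m' = eqToHom e' ≫ cycι G m' := by
      rintro m m' rfl e e'
      simp only [eqToHom_refl, comp_id, id_comp]
      simpa [eMap] using ι_e hσ m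
    have hk := key (n+1-1) n (by omega) (congrArg G.X (by omega)) (congrArg (cyc G) (by omega))
    simp only [assoc] at hk ⊢
    rw [hk]
    simp
  · rw [biprod.inr_desc_assoc, assoc, cycι_d, comp_zero]
    simp

lemma phiF_psiF (n : ℤ) : phiF G σ n ≫ psiF G σ n = 𝟙 (G.X n) := by
  dsimp only [phiF, psiF]
  rw [biprod.lift_desc]
  have h2 : (cycP G σ n ≫ eqToHom (congrArg (cyc G) (by omega : n = n + 1 - 1))) ≫
      (eqToHom (congrArg (cyc G) (by omega : n + 1 - 1 = n)) ≫ cycι G n) = eMap G σ n := by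
    simp only [assoc, eqToHom_trans_assoc, eqToHom_refl, id_comp]
    exact cycP_ι G σ n
  have h1 : (G.d n (n-1) ≫ cycP G σ (n-1)) ≫
      (cycι G (n-1) ≫ σ (n-1) ≫ eqToHom (congrArg G.X (by omega : n - 1 + 1 = n))) =
      fMap G σ n := by
    simp only [assoc]
    rw [reassoc_of% (cycP_ι G σ (n-1))]
    rw [show eMap G σ (n-1) = 𝟙 _ - fMap G σ (n-1) from by rw [← ef_total hσ (n-1)]; abel]
    simp only [Preadditive.sub_comp, Preadditive.comp_sub, id_comp]
    rw [reassoc_of% (d_f hσ n)]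
    dsimp [fMap]
    simp
  rw [h1, h2, add_comm]
  exact ef_total hσ n

omit hσ in
/-- A `2 × 2` unitriangular matrix is invertible. -/
lemma matrix_iso {X Y : A} (M : X ⊞ Y ⟶ X ⊞ Y)
    (h11 : biprod.inl ≫ M ≫ biprod.fst = 𝟙 X)
    (h21 : biprod.inr ≫ M ≫ biprod.fst = 0)
    (h22 : biprod.inr ≫ M ≫ biprod.snd = 𝟙 Y) : IsIso M := by
  have hM : M = biprod.desc (biprod.lift (𝟙 X) (biprod.inl ≫ M ≫ biprod.snd)) biprod.inr := by
    apply biprod.hom_ext' <;> apply biprod.hom_ext <;>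
      simp [reassoc_of% h11, reassoc_of% h21, reassoc_of% h22, h11, h21, h22]
  refine ⟨biprod.desc (biprod.lift (𝟙 X) (-(biprod.inl ≫ M ≫ biprod.snd))) biprod.inr, ?_, ?_⟩ <;>
  · rw [hM]
    apply biprod.hom_ext' <;> apply biprod.hom_ext <;>
      simp [biprod.lift_desc]

lemma psiF_isIso (n : ℤ) : IsIso (psiF G σ n) := by
  have hep : cycι G (n-1) ≫ σ (n-1) ≫ eqToHom (congrArg G.X (by omega : n - 1 + 1 = n)) ≫
      G.d n (n-1) ≫ cycP G σ (n-1) = 𝟙 (cyc G (n-1)) := by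
    rw [reassoc_of% (eqToHom_d G (by omega : n - 1 + 1 = n))]
    have : cycι G (n-1) ≫ eMap G σ (n-1) ≫ cycP G σ (n-1) = 𝟙 (cyc G (n-1)) := by
      rw [reassoc_of% (ι_e hσ (n-1))]
      exact ι_P hσ (n-1)
    calc cycι G (n-1) ≫ σ (n-1) ≫ G.d (n-1+1) (n-1) ≫ cycP G σ (n-1)
        = cycι G (n-1) ≫ eMap G σ (n-1) ≫ cycP G σ (n-1) := by
          dsimp [eMap]; simp only [assoc]
      _ = 𝟙 (cyc G (n-1)) := this
  have h11 : biprod.inl ≫ (psiF G σ n ≫ phiF G σ n) ≫ biprod.fst = 𝟙 _ := by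
    dsimp only [psiF, phiF]
    simp only [assoc, biprod.inl_desc_assoc, biprod.lift_fst]
    simpa using hep
  have h21 : biprod.inr ≫ (psiF G σ n ≫ phiF G σ n) ≫ biprod.fst = 0 := by
    dsimp only [psiF, phiF]
    simp only [assoc, biprod.inr_desc_assoc, biprod.lift_fst]
    rw [reassoc_of% (cycι_d G n (n-1))]
    simp
  have h22 : biprod.inr ≫ (psiF G σ n ≫ phiF G σ n) ≫ biprod.snd = 𝟙 _ := by
    dsimp only [psiF, phiF]
    simp only [assoc, biprod.inr_desc_assoc, biprod.lift_snd]
    rw [reassoc_of% (ι_P hσ n)]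
    simp [eqToHom_trans]
  haveI hMiso : IsIso (psiF G σ n ≫ phiF G σ n) := matrix_iso _ h11 h21 h22
  have hsm : psiF G σ n ≫ (phiF G σ n ≫ inv (psiF G σ n ≫ phiF G σ n)) = 𝟙 _ := by
    rw [← assoc, IsIso.hom_inv_id]
  haveI : Mono (psiF G σ n) := by
    haveI : Mono (psiF G σ n ≫ (phiF G σ n ≫ inv (psiF G σ n ≫ phiF G σ n))) := by
      rw [hsm]; infer_instance
    exact mono_of_mono (psiF G σ n) (phiF G σ n ≫ inv (psiF G σ n ≫ phiF G σ n))
  haveI : Epi (psiF G σ n) := by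
    haveI : Epi (phiF G σ n ≫ psiF G σ n) := by rw [phiF_psiF hσ]; infer_instance
    exact epi_of_epi (phiF G σ n) (psiF G σ n)
  exact isIso_of_mono_of_epi _

/-- A contractible complex decomposes as a sum of disks on its cycles. -/
lemma exists_sumDisk_iso :
    ∃ F : ℤ → A, (∀ n : ℤ, ∃ (s : F n ⟶ G.X (n-1)) (t : G.X (n-1) ⟶ F n), s ≫ t = 𝟙 (F n)) ∧
      Nonempty (sumDisk F ≅ G) := by
  refine ⟨fun m => cyc G (m - 1),
    fun n => ⟨cycι G (n-1), cycP G σ (n-1), ι_P hσ (n-1)⟩, ?_⟩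
  let ψ : sumDisk (fun m => cyc G (m - 1)) ⟶ G :=
    { f := psiF G σ
      comm' := by
        intro i j hij
        obtain rfl : i = j + 1 := ((by simpa using hij) : j + 1 = i).symm
        exact psiF_comm hσ j }
  haveI : ∀ n : ℤ, IsIso (ψ.f n) := fun n => psiF_isIso hσ n
  haveI : IsIso ψ := HomologicalComplex.Hom.isIso_of_components ψ
  exact ⟨asIso ψ⟩

end Decomp

section Main
set_option linter.unusedSectionVars false

variable {A : Type u} [Category.{v} A] [Abelian A]

lemma dwPerp_of_iso (𝒳 : Set A) {C C' : Cx A} (e : C ≅ C') (h : C' ∈ dwPerp 𝒳) :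
    C ∈ dwPerp 𝒳 := by
  intro G' hG' W i p hE
  have hE' : ChEExact 𝒳 (e.inv ≫ i) p := by
    intro n
    obtain ⟨w, hSE, hl⟩ := hE n
    have w' : (e.inv ≫ i).f n ≫ p.f n = 0 := by
      rw [HomologicalComplex.comp_f, assoc, w, comp_zero]
    refine ⟨w', ?_, hl⟩
    have eiso : ShortComplex.mk (i.f n) (p.f n) w ≅
        ShortComplex.mk ((e.inv ≫ i).f n) (p.f n) w' := by
      refine ShortComplex.isoMk ((HomologicalComplex.eval A _ n).mapIso e)
        (Iso.refl _) (Iso.refl _) ?_ ?_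
      · dsimp
        rw [comp_id]; change e.hom.f n ≫ e.inv.f n ≫ i.f n = i.f n; rw [← assoc]
        have : e.hom.f n ≫ e.inv.f n = 𝟙 (C.X n) := by
          rw [← HomologicalComplex.comp_f, e.hom_inv_id]; rfl
        rw [this, id_comp]
      · dsimp
        rw [comp_id, id_comp]
    exact ShortComplex.shortExact_of_iso eiso hSE
  obtain ⟨r, hr⟩ := h G' hG' (e.inv ≫ i) p hE'
  refine ⟨r ≫ e.inv, ?_⟩
  have hir : i ≫ r = e.hom := by
    calc i ≫ r = e.hom ≫ (e.inv ≫ i) ≫ r := by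
          rw [← assoc, ← assoc, e.hom_inv_id, id_comp]
      _ = e.hom := by rw [hr, comp_id]
  rw [← assoc, hir, e.hom_inv_id]

end Main


/-- `E-dw X̃ ∩ (E-dw X̃)^⊥ = X̃_E`: the complexes with terms in `𝒳` lying
in the right orthogonal are exactly the contractible complexes `⊕ₙ Dⁿ(X'ₙ)` with
`X'ₙ ∈ 𝒳`. -/
theorem stmt_16 {A : Type u} [Category.{v} A] [Abelian A] [HasLimits A] [HasColimits A]
    (𝒳 𝒴 : Set A) (hbp : BalancedPair 𝒳 𝒴) (hadm : Admissible 𝒳 𝒴) (G : Cx A) :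
    (G ∈ dwX 𝒳 ∧ G ∈ dwPerp 𝒳) ↔
      ∃ F : ℤ → A, (∀ n : ℤ, F n ∈ 𝒳) ∧ Nonempty (G ≅ ∐ fun n : ℤ => disk (F n) n) := by
  constructor
  · rintro ⟨hdw, hperp⟩
    obtain ⟨σ, hσ⟩ := exists_contraction G 𝒳 hdw hperp
    obtain ⟨F, hFsummand, ⟨e⟩⟩ := exists_sumDisk_iso hσ
    refine ⟨F, ?_, ⟨e.symm ≪≫ sumDiskIsoCoprod F⟩⟩
    intro n
    obtain ⟨s, t, hst⟩ := hFsummand n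
    exact hbp.summandClosedX (hdw (n-1)) s t hst
  · rintro ⟨F, hF, ⟨e⟩⟩
    have e' : G ≅ sumDisk F := e ≪≫ (sumDiskIsoCoprod F).symm
    constructor
    · intro n
      exact hbp.isoClosedX (hbp.biprod_mem (hF n) (hF (n+1)))
        ((HomologicalComplex.eval A _ n).mapIso e').symm
    · exact dwPerp_of_iso 𝒳 e' (sumDisk_mem_dwPerp 𝒳 F)


end Paper
end

section
/- Let K⁰ → K¹ → K² → ⋯ be a direct system in Ch(A, E) with each transition map an admissible monomorphism, where (X, Y) is an admissible balanced pair in a complete and cocomplete abelian category A and E the induced exact structure. If each Kⁿ lies in (E-dwX̃)⊥ (equivalently, every chain map from a complex of objects of X to Kⁿ is null homotopic), then the colimit K = colim Kⁿ is right X-acyclic. -/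
open CategoryTheory Category Limits ZeroObject

universe v u

namespace Paper

variable {A : Type u} [Category.{v} A] [Abelian A]

/-! ### Auxiliary machinery -/

section Aux

variable {𝒳 𝒴 : Set A}

lemma RightAcyclic.at' {K : Cx A} (hK : RightAcyclic 𝒳 K)
    {n m l : ℤ} (hn : n = m + 1) (hl : l = m - 1) {X : A} (hX : X ∈ 𝒳)
    (g : X ⟶ K.X m) (hg : g ≫ K.d m l = 0) :
    ∃ h : X ⟶ K.X n, h ≫ K.d n m = g := by
  subst hn hl; exact hK m hX g hg

lemma LeftAcyclic.at' {K : Cx A} (hK : LeftAcyclic 𝒴 K)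
    {n m l : ℤ} (hn : n = m + 1) (hl : l = m - 1) {Y : A} (hY : Y ∈ 𝒴)
    (g : K.X m ⟶ Y) (hg : K.d n m ≫ g = 0) :
    ∃ h : K.X l ⟶ Y, K.d m l ≫ h = g := by
  subst hn hl; exact hK m hY g hg

lemma zero_mem_X (hbp : BalancedPair 𝒳 𝒴) : (0 : A) ∈ 𝒳 := by
  obtain ⟨X, hX, -⟩ := hbp.contravariantlyFinite 0
  exact hbp.summandClosedX hX 0 0 ((isZero_zero A).eq_of_src _ _)

lemma zero_mem_Y (hbp : BalancedPair 𝒳 𝒴) : (0 : A) ∈ 𝒴 := by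
  obtain ⟨Y, hY, -⟩ := hbp.covariantlyFinite 0
  exact hbp.summandClosedY hY 0 0 ((isZero_zero A).eq_of_src _ _)

/-- The sphere complex: `X` in degree `n`, zero elsewhere, zero differentials. -/
noncomputable def sphere (X : A) (n : ℤ) : Cx A where
  X k := if k = n then X else 0
  d _ _ := 0
  shape _ _ _ := rfl
  d_comp_d' _ _ _ _ _ := by simp

lemma sphere_X_eq (X : A) (n : ℤ) : (sphere X n).X n = X := if_pos rfl

/-- Correction map for the extension complex. -/
noncomputable def corr (K : Cx A) (X : A) (n : ℤ) (g : X ⟶ K.X n) (i j : ℤ) :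
    (sphere X (n + 1)).X i ⟶ K.X j :=
  if h : i = n + 1 ∧ j = n then
    eqToHom (by rw [h.1, sphere_X_eq]) ≫ g ≫ eqToHom (by rw [h.2]) else 0

lemma corr_comp_d {K : Cx A} {X : A} {n : ℤ} (g : X ⟶ K.X n)
    (hg : g ≫ K.d n (n - 1) = 0) (i j k : ℤ) :
    corr K X n g i j ≫ K.d j k = 0 := by
  unfold corr
  split_ifs with h
  · obtain ⟨hi, hj⟩ := h
    subst hj
    by_cases hk : k = j - 1
    · subst hk
      simp [hg]
    · rw [K.shape j k (by simp only [ComplexShape.down_Rel]; omega)]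
      simp
  · simp

lemma corr_shape {K : Cx A} {X : A} {n : ℤ} (g : X ⟶ K.X n) {i j : ℤ}
    (hij : ¬ (ComplexShape.down ℤ).Rel i j) :
    corr K X n g i j = 0 := by
  unfold corr
  rw [dif_neg]
  rintro ⟨rfl, rfl⟩
  exact hij (by simp [ComplexShape.down_Rel])

/-- The extension complex `K ⊕ Sⁿ⁺¹(X)` with differential twisted by `g`. -/
noncomputable def extCx (K : Cx A) (X : A) (n : ℤ) (g : X ⟶ K.X n)
    (hg : g ≫ K.d n (n - 1) = 0) : Cx A where
  X m := K.X m ⊞ (sphere X (n + 1)).X m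
  d i j := biprod.lift (biprod.fst ≫ K.d i j + biprod.snd ≫ corr K X n g i j) 0
  shape i j hij := by
    try dsimp only
    rw [K.shape i j hij, corr_shape g hij]
    apply biprod.hom_ext <;> simp
  d_comp_d' i j k _ _ := by
    try dsimp only
    apply biprod.hom_ext
    · simp [corr_comp_d g hg i j k]
    · simp

/-- The inclusion `K ⟶ extCx`. -/
noncomputable def extInl (K : Cx A) (X : A) (n : ℤ) (g : X ⟶ K.X n)
    (hg : g ≫ K.d n (n - 1) = 0) : K ⟶ extCx K X n g hg where
  f _ := biprod.inl
  comm' i j _ := by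
    apply biprod.hom_ext <;> simp [extCx]

/-- The projection `extCx ⟶ sphere`. -/
noncomputable def extSnd (K : Cx A) (X : A) (n : ℤ) (g : X ⟶ K.X n)
    (hg : g ≫ K.d n (n - 1) = 0) : extCx K X n g hg ⟶ sphere X (n + 1) where
  f _ := biprod.snd
  comm' i j _ := by
    simp [extCx, sphere]
    exact (biprod.lift_snd _ _).symm

lemma chEExact_ext (K : Cx A) (X : A) (n : ℤ) (g : X ⟶ K.X n)
    (hg : g ≫ K.d n (n - 1) = 0) :
    ChEExact 𝒳 (extInl K X n g hg) (extSnd K X n g hg) := by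
  intro m
  refine ⟨by simp [extInl, extSnd]; exact biprod.inl_snd, ?_, ?_⟩
  · exact (ShortComplex.Splitting.ofHasBinaryBiproduct (K.X m)
      ((sphere X (n + 1)).X m)).shortExact
  · intro X' _ g'
    exact ⟨g' ≫ biprod.inr, by simp [extSnd]; erw [assoc, biprod.inr_snd, comp_id]⟩

/-- Every complex in `(E-dw X̃)^⊥` is right `𝒳`-acyclic. -/
lemma rightAcyclic_of_mem_dwPerp (hbp : BalancedPair 𝒳 𝒴) {K : Cx A}
    (hK : K ∈ dwPerp 𝒳) : RightAcyclic 𝒳 K := by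
  intro n X hX g hg
  have hsp : sphere X (n + 1) ∈ dwX 𝒳 := by
    intro m
    show (if m = n + 1 then X else 0) ∈ 𝒳
    split_ifs
    · exact hX
    · exact zero_mem_X hbp
  obtain ⟨r, hr⟩ := hK _ hsp (extInl K X n g hg) (extSnd K X n g hg)
    (chEExact_ext K X n g hg)
  have hrn : biprod.inl ≫ r.f n = 𝟙 (K.X n) := by
    have := congr_arg (fun φ => HomologicalComplex.Hom.f φ n) hr
    simp at this; exact this
  have comm : r.f (n + 1) ≫ K.d (n + 1) n = (extCx K X n g hg).d (n + 1) n ≫ r.f n :=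
    r.comm (n + 1) n
  have h1 : (biprod.inr ≫ (extCx K X n g hg).d (n + 1) n : _ ⟶ K.X n ⊞ _)
      = corr K X n g (n + 1) n ≫ biprod.inl := by
    apply biprod.hom_ext <;> simp [extCx]
  refine ⟨eqToHom (sphere_X_eq X (n + 1)).symm ≫ (biprod.inr : _ ⟶ (extCx K X n g hg).X (n + 1)) ≫ r.f (n + 1), ?_⟩
  erw [assoc, assoc, comm, ← assoc, ← assoc, assoc (eqToHom _), h1]
  erw [assoc, assoc, hrn, comp_id]
  unfold corr
  rw [dif_pos ⟨rfl, rfl⟩]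
  simp

end Aux


/-! ### Cycles of right acyclic complexes -/

lemma epi_kernelLift (hbp : BalancedPair 𝒳 𝒴) (hadm : Admissible 𝒳 𝒴) {K : Cx A}
    (hK : RightAcyclic 𝒳 K) (n m l : ℤ) (hm : m = n - 1) (hl : l = m - 1) :
    Epi (kernel.lift (K.d m l) (K.d n m) (K.d_comp_d n m l)) := by
  obtain ⟨X, hX, π, hπ⟩ := hbp.contravariantlyFinite (kernel (K.d m l))
  haveI hπe : Epi π := hadm.1 hX π hπ
  obtain ⟨h, hh⟩ := hK.at' (show n = m + 1 by omega) hl hX (π ≫ kernel.ι (K.d m l))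
    (by simp)
  have fac : h ≫ kernel.lift (K.d m l) (K.d n m) (K.d_comp_d n m l) = π := by
    rw [← cancel_mono (kernel.ι (K.d m l))]
    simp [hh]
  exact epi_of_epi_fac fac

lemma eexact_cycles (hbp : BalancedPair 𝒳 𝒴) (hadm : Admissible 𝒳 𝒴) {K : Cx A}
    (hK : RightAcyclic 𝒳 K) (n m l : ℤ) (hm : m = n - 1) (hl : l = m - 1) :
    EExact 𝒳 (kernel.ι (K.d n m)) (kernel.lift (K.d m l) (K.d n m) (K.d_comp_d n m l)) := by
  haveI hepi := epi_kernelLift hbp hadm hK n m l hm hl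
  have w : kernel.ι (K.d n m) ≫ kernel.lift (K.d m l) (K.d n m) (K.d_comp_d n m l) = 0 := by
    rw [← cancel_mono (kernel.ι (K.d m l))]
    simp
  refine ⟨w, ⟨?_⟩, ?_⟩
  · apply ShortComplex.exact_of_f_is_kernel
    exact KernelFork.IsLimit.ofι' _ _ (fun {T} t ht =>
      ⟨kernel.lift (K.d n m) t (by
          have := ht =≫ kernel.ι (K.d m l)
          simpa using this),
        by simp⟩)
  · intro X' hX' t
    obtain ⟨h, hh⟩ := hK.at' (show n = m + 1 by omega) hl hX' (t ≫ kernel.ι (K.d m l))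
      (by simp)
    refine ⟨h, ?_⟩
    rw [← cancel_mono (kernel.ι (K.d m l))]
    simp [hh]

/-! ### `E`-exact sequences are `Hom(-, 𝒴)`-exact -/

/-- An `E`-exact sequence with left term in `𝒴` splits. -/
lemma splitting_of_Y (hbp : BalancedPair 𝒳 𝒴) (hadm : Admissible 𝒳 𝒴)
    {Y₀ W C : A} (hY : Y₀ ∈ 𝒴) (j : Y₀ ⟶ W) (q : W ⟶ C) (hE : EExact 𝒳 j q) :
    ∃ r : W ⟶ Y₀, j ≫ r = 𝟙 Y₀ := by
  obtain ⟨w0, hSE, hlift⟩ := hE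
  haveI := hSE.mono_f
  haveI := hSE.epi_g
  obtain ⟨R, ⟨hRX, hRz, ⟨α⟩⟩, hRright, hRleft⟩ := hbp.resolution C
  set d₀' : R.X 0 ⟶ C := R.d 0 (-1) ≫ α.hom with hd₀'
  -- `d₀'` is epi
  haveI hd₀e : Epi d₀' := by
    obtain ⟨X, hX, π, hπ⟩ := hbp.contravariantlyFinite C
    haveI : Epi π := hadm.1 hX π hπ
    obtain ⟨h, hh⟩ := hRright.at' (show (0 : ℤ) = -1 + 1 by omega) (show (-2 : ℤ) = -1 - 1 by omega)
      hX (π ≫ α.inv) ((hRz (-2) (by omega)).eq_of_tgt _ _)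
    have fac : h ≫ d₀' = π := by rw [hd₀', ← assoc, hh, assoc, α.inv_hom_id, comp_id]
    exact epi_of_epi_fac fac
  -- the induced map `R.X 1 → ker d₀'` is epi
  have hcond : R.d 1 0 ≫ d₀' = 0 := by
    rw [hd₀', ← assoc, R.d_comp_d, zero_comp]
  haveI hepi1 : Epi (kernel.lift d₀' (R.d 1 0) hcond) := by
    obtain ⟨X, hX, π, hπ⟩ := hbp.contravariantlyFinite (kernel d₀')
    haveI : Epi π := hadm.1 hX π hπ
    obtain ⟨h, hh⟩ := hRright.at' (show (1 : ℤ) = 0 + 1 by omega) (show (-1 : ℤ) = 0 - 1 by omega)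
      hX (π ≫ kernel.ι d₀') (by
        rw [← cancel_mono α.hom, zero_comp, assoc, assoc, ← hd₀']
        simp)
    have fac : h ≫ kernel.lift d₀' (R.d 1 0) hcond = π := by
      rw [← cancel_mono (kernel.ι d₀')]
      simp [hh]
    exact epi_of_epi_fac fac
  -- lift `d₀'` through `q`
  obtain ⟨u, hu⟩ := hlift (hRX 0 le_rfl) d₀'
  -- the boundary map into `Y₀`
  have h1 : (R.d 1 0 ≫ u) ≫ q = 0 := by rw [assoc, hu, hcond]
  set v : R.X 1 ⟶ Y₀ := hSE.exact.lift (R.d 1 0 ≫ u) h1 with hv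
  have hvj : v ≫ j = R.d 1 0 ≫ u := hSE.exact.lift_f _ _
  have hv2 : R.d 2 1 ≫ v = 0 := by
    rw [← cancel_mono j, assoc, hvj, ← assoc, R.d_comp_d, zero_comp, zero_comp]
  obtain ⟨w', hw'⟩ := hRleft.at' (show (2 : ℤ) = 1 + 1 by omega) (show (0 : ℤ) = 1 - 1 by omega)
    hY v hv2
  set u' : R.X 0 ⟶ W := u - w' ≫ j with hu'
  have hu'q : u' ≫ q = d₀' := by
    rw [hu', Preadditive.sub_comp, assoc, w0, comp_zero, sub_zero, hu]
  have hd1u' : R.d 1 0 ≫ u' = 0 := by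
    rw [hu', Preadditive.comp_sub, ← assoc, hw', hvj, sub_self]
  -- descend `u'` through `d₀'`
  have hker : kernel.ι d₀' ≫ u' = 0 := by
    have := kernel.lift d₀' (R.d 1 0) hcond ≫= (rfl : kernel.ι d₀' ≫ u' = kernel.ι d₀' ≫ u')
    rw [← cancel_epi (kernel.lift d₀' (R.d 1 0) hcond), ← assoc]
    simp [hd1u']
  set s : C ⟶ W := Abelian.epiDesc d₀' u' hker with hs
  have hds : d₀' ≫ s = u' := Abelian.comp_epiDesc _ _ _
  have hsq : s ≫ q = 𝟙 C := by
    rw [← cancel_epi d₀', ← assoc, hds, hu'q, comp_id]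
  exact ⟨(ShortComplex.Splitting.ofExactOfSection _ hSE.exact s hsq hSE.mono_f).r,
    (ShortComplex.Splitting.ofExactOfSection _ hSE.exact s hsq hSE.mono_f).f_r⟩

/-- `E`-exact sequences are `Hom(-, Y)`-exact for `Y ∈ 𝒴`. -/
lemma eexact_extend (hbp : BalancedPair 𝒳 𝒴) (hadm : Admissible 𝒳 𝒴)
    {D W C : A} {i : D ⟶ W} {p : W ⟶ C} (hE : EExact 𝒳 i p)
    {Y : A} (hY : Y ∈ 𝒴) (g : D ⟶ Y) : ∃ h : W ⟶ Y, i ≫ h = g := by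
  obtain ⟨w0, hSE, hlift⟩ := hE
  haveI := hSE.mono_f
  haveI := hSE.epi_g
  obtain ⟨Y₀, hY₀, e, he⟩ := hbp.covariantlyFinite D
  haveI : Mono e := hadm.2 hY₀ e he
  -- pushout
  set P := pushout i e with hP
  set q' : P ⟶ C := pushout.desc p 0 (by rw [w0, comp_zero]) with hq'
  have winr : pushout.inr i e ≫ q' = 0 := pushout.inr_desc _ _ _
  haveI : Mono (pushout.inr i e) := inferInstance
  haveI : Epi q' := epi_of_epi_fac (pushout.inl_desc p 0 _ : pushout.inl i e ≫ q' = p)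
  have hexact : (ShortComplex.mk (pushout.inr i e) q' winr).Exact := by
    apply ShortComplex.exact_of_g_is_cokernel
    refine CokernelCofork.IsColimit.ofπ' _ _ (fun {T} t ht => ?_)
    · have hit : i ≫ pushout.inl i e ≫ t = 0 := by
        rw [pushout.condition_assoc, ht, comp_zero]
      refine ⟨hSE.exact.desc (pushout.inl i e ≫ t) hit, ?_⟩
      apply pushout.hom_ext
      · rw [pushout.inl_desc_assoc, hSE.exact.g_desc]
      · rw [pushout.inr_desc_assoc, zero_comp, ht]
  have hE' : EExact 𝒳 (pushout.inr i e) q' := by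
    refine ⟨winr, { exact := hexact }, ?_⟩
    intro X hX t
    obtain ⟨h, hh⟩ := hlift hX t
    exact ⟨h ≫ pushout.inl i e, by rw [assoc, pushout.inl_desc, hh]⟩
  obtain ⟨r, hr⟩ := splitting_of_Y hbp hadm hY₀ (pushout.inr i e) q' hE'
  obtain ⟨g', hg'⟩ := he hY g
  refine ⟨pushout.inl i e ≫ r ≫ g', ?_⟩
  rw [← assoc, pushout.condition, assoc, reassoc_of% hr, hg']

/-- Right `𝒳`-acyclic implies left `𝒴`-acyclic. -/
lemma leftAcyclic_of_rightAcyclic (hbp : BalancedPair 𝒳 𝒴) (hadm : Admissible 𝒳 𝒴)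
    {K : Cx A} (hK : RightAcyclic 𝒳 K) : LeftAcyclic 𝒴 K := by
  intro n Y hY g hg
  set e₁ : K.X n ⟶ kernel (K.d (n-1) (n-1-1)) :=
    kernel.lift (K.d (n-1) (n-1-1)) (K.d n (n-1)) (K.d_comp_d _ _ _) with he₁
  haveI : Epi e₁ := epi_kernelLift hbp hadm hK n (n-1) (n-1-1) rfl rfl
  -- `g` kills the kernel of `e₁`
  haveI : Epi (kernel.lift (K.d n (n-1)) (K.d (n+1) n) (K.d_comp_d _ _ _)) :=
    epi_kernelLift hbp hadm hK (n+1) n (n-1) (by omega) rfl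
  have hk0 : kernel.ι (K.d n (n-1)) ≫ g = 0 := by
    rw [← cancel_epi (kernel.lift (K.d n (n-1)) (K.d (n+1) n) (K.d_comp_d _ _ _)), ← assoc]
    simp [hg]
  have hkere₁ : kernel.ι e₁ ≫ g = 0 := by
    have h2 : kernel.ι e₁ ≫ K.d n (n-1) = 0 := by
      have : kernel.ι e₁ ≫ e₁ ≫ kernel.ι (K.d (n-1) (n-1-1)) = 0 := by
        rw [← assoc, kernel.condition, zero_comp]
      simpa [he₁] using this
    have := kernel.lift_ι (K.d n (n-1)) (kernel.ι e₁) h2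
    rw [← this, assoc, hk0, comp_zero]
  set gbar : kernel (K.d (n-1) (n-1-1)) ⟶ Y := Abelian.epiDesc e₁ g hkere₁ with hgbar
  have hgbare : e₁ ≫ gbar = g := Abelian.comp_epiDesc _ _ _
  -- extend over the admissible mono `Z_{n-1} ↪ K_{n-1}`
  obtain ⟨h, hh⟩ := eexact_extend hbp hadm
    (eexact_cycles hbp hadm hK (n-1) (n-1-1) (n-1-1-1) rfl rfl) hY gbar
  refine ⟨h, ?_⟩
  have : K.d n (n-1) = e₁ ≫ kernel.ι (K.d (n-1) (n-1-1)) := by simp [he₁]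
  rw [this, assoc, hh, hgbare]


/-! ### Dual side: left acyclicity gives right acyclicity -/

lemma mono_cokernelDesc (hbp : BalancedPair 𝒳 𝒴) (hadm : Admissible 𝒳 𝒴) {K : Cx A}
    (hK : LeftAcyclic 𝒴 K) (n m l : ℤ) (hm : m = n - 1) (hl : l = m - 1) :
    Mono (cokernel.desc (K.d n m) (K.d m l) (K.d_comp_d n m l)) := by
  obtain ⟨Y', hY', apx, hapx⟩ := hbp.covariantlyFinite (cokernel (K.d n m))
  haveI : Mono apx := hadm.2 hY' apx hapx
  obtain ⟨h, hh⟩ := hK.at' (show n = m + 1 by omega) hl hY'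
    (cokernel.π (K.d n m) ≫ apx) (by simp)
  have fac : cokernel.desc (K.d n m) (K.d m l) (K.d_comp_d n m l) ≫ h = apx := by
    rw [← cancel_epi (cokernel.π (K.d n m)), ← assoc, cokernel.π_desc, hh]
  exact mono_of_mono_fac fac

lemma co_ses (hbp : BalancedPair 𝒳 𝒴) (hadm : Admissible 𝒳 𝒴) {K : Cx A}
    (hK : LeftAcyclic 𝒴 K) (n m l : ℤ) (hm : m = n - 1) (hl : l = m - 1) :
    ∃ w : cokernel.desc (K.d n m) (K.d m l) (K.d_comp_d n m l) ≫ cokernel.π (K.d m l) = 0,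
      (ShortComplex.mk _ _ w).ShortExact ∧
      ∀ ⦃Y : A⦄, Y ∈ 𝒴 → ∀ g : cokernel (K.d n m) ⟶ Y,
        ∃ h : K.X l ⟶ Y, cokernel.desc (K.d n m) (K.d m l) (K.d_comp_d n m l) ≫ h = g := by
  haveI := mono_cokernelDesc hbp hadm hK n m l hm hl
  have w : cokernel.desc (K.d n m) (K.d m l) (K.d_comp_d n m l) ≫ cokernel.π (K.d m l) = 0 := by
    rw [← cancel_epi (cokernel.π (K.d n m)), ← assoc, cokernel.π_desc,
      cokernel.condition, comp_zero]
  refine ⟨w, ⟨?_⟩, ?_⟩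
  · apply ShortComplex.exact_of_g_is_cokernel
    exact CokernelCofork.IsColimit.ofπ' _ _ (fun {T} t ht =>
      ⟨cokernel.desc (K.d m l) t (by
          rw [← cokernel.π_desc (K.d n m) (K.d m l) (K.d_comp_d n m l), assoc, ht, comp_zero]),
        by simp⟩)
  · intro Y hY g
    obtain ⟨h, hh⟩ := hK.at' (show n = m + 1 by omega) hl hY
      (cokernel.π (K.d n m) ≫ g) (by simp)
    refine ⟨h, ?_⟩
    rw [← cancel_epi (cokernel.π (K.d n m)), ← assoc, cokernel.π_desc, hh]

/-- A `Hom(-, 𝒴)`-exact sequence with right term in `𝒳` splits. -/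
lemma splitting_of_X (hbp : BalancedPair 𝒳 𝒴) (hadm : Admissible 𝒳 𝒴)
    {D P X₀ : A} (hX₀ : X₀ ∈ 𝒳) (i' : D ⟶ P) (b : P ⟶ X₀) (w0 : i' ≫ b = 0)
    (hSE : (ShortComplex.mk i' b w0).ShortExact)
    (hext : ∀ ⦃Y : A⦄, Y ∈ 𝒴 → ∀ g : D ⟶ Y, ∃ h : P ⟶ Y, i' ≫ h = g) :
    ∃ s : X₀ ⟶ P, s ≫ b = 𝟙 X₀ := by
  haveI := hSE.mono_f
  haveI := hSE.epi_g
  obtain ⟨R, ⟨hRY, hRz, ⟨α⟩⟩, hRright, hRleft⟩ := hbp.coresolution D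
  set e' : D ⟶ R.X (-1) := α.inv ≫ R.d 0 (-1) with he'
  clear_value e'
  have hα : α.hom ≫ e' = R.d 0 (-1) := by
    rw [he', ← assoc, α.hom_inv_id, id_comp]
  have he'd : e' ≫ R.d (-1) (-2) = 0 := by
    rw [he', assoc, R.d_comp_d, comp_zero]
  -- `e'` is mono
  haveI hK0 : Mono e' := by
    obtain ⟨Y', hY', apx, hapx⟩ := hbp.covariantlyFinite (R.X 0)
    haveI : Mono apx := hadm.2 hY' apx hapx
    obtain ⟨h₀, hh₀⟩ := hRleft.at' (show (1 : ℤ) = 0 + 1 by omega)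
      (show (-1 : ℤ) = 0 - 1 by omega) hY' apx ((hRz 1 (by omega)).eq_of_src _ _)
    haveI : Mono (R.d 0 (-1)) := mono_of_mono_fac hh₀
    rw [he']
    exact mono_comp _ _
  set ebar : D ⟶ kernel (R.d (-1) (-2)) := kernel.lift (R.d (-1) (-2)) e' he'd with hebar
  -- the cycles `Z⁻¹` are recovered by `D`
  have hκc : kernel.ι (R.d (-1) (-2)) ≫ cokernel.π e' = 0 := by
    obtain ⟨Y'', hY'', ιQ, hιQ⟩ := hbp.covariantlyFinite (cokernel e')
    haveI : Mono ιQ := hadm.2 hY'' ιQ hιQ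
    obtain ⟨h₂, hh₂⟩ := hRleft.at' (show (0 : ℤ) = -1 + 1 by omega)
      (show (-2 : ℤ) = -1 - 1 by omega) hY'' (cokernel.π e' ≫ ιQ) (by
        have h5 : R.d 0 (-1) ≫ cokernel.π e' ≫ ιQ = α.hom ≫ e' ≫ cokernel.π e' ≫ ιQ := by
          rw [← hα, assoc]
        rw [h5, cokernel.condition_assoc, zero_comp, comp_zero])
    rw [← cancel_mono ιQ, assoc, ← hh₂, ← assoc, kernel.condition, zero_comp, zero_comp]
  set z : kernel (R.d (-1) (-2)) ⟶ D := Abelian.monoLift e' (kernel.ι (R.d (-1) (-2))) hκc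
    with hz
  have hzκ : z ≫ e' = kernel.ι (R.d (-1) (-2)) := Abelian.monoLift_comp _ _ _
  have hze : ebar ≫ z = 𝟙 D := by
    rw [← cancel_mono e', assoc, hzκ, hebar, kernel.lift_ι, id_comp]
  -- extend `e'` over `i'` and correct it
  obtain ⟨u, hu⟩ := hext (hRY (-1) le_rfl) e'
  have hiv : i' ≫ u ≫ R.d (-1) (-2) = 0 := by
    rw [← assoc, hu, he'd]
  set v : X₀ ⟶ R.X (-2) := hSE.exact.desc (u ≫ R.d (-1) (-2)) hiv with hv
  have hbv : b ≫ v = u ≫ R.d (-1) (-2) := hSE.exact.g_desc _ _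
  have hvd : v ≫ R.d (-2) (-3) = 0 := by
    rw [← cancel_epi b, ← assoc, hbv, assoc, R.d_comp_d, comp_zero, comp_zero]
  obtain ⟨w', hw'⟩ := hRright.at' (show (-1 : ℤ) = -2 + 1 by omega)
    (show (-3 : ℤ) = -2 - 1 by omega) hX₀ v hvd
  set u' : P ⟶ R.X (-1) := u - b ≫ w' with hu'
  have hi'u' : i' ≫ u' = e' := by
    rw [hu', Preadditive.comp_sub, hu, ← assoc, w0, zero_comp, sub_zero]
  have hu'd : u' ≫ R.d (-1) (-2) = 0 := by
    rw [hu', Preadditive.sub_comp, assoc, hw', hbv, sub_self]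
  set u'' : P ⟶ kernel (R.d (-1) (-2)) := kernel.lift (R.d (-1) (-2)) u' hu'd with hu''
  have hi'u'' : i' ≫ u'' = ebar := by
    rw [← cancel_mono (kernel.ι (R.d (-1) (-2))), assoc, hu'', kernel.lift_ι, hi'u',
      hebar, kernel.lift_ι]
  have hir : i' ≫ u'' ≫ z = 𝟙 D := by
    rw [← assoc, hi'u'', hze]
  exact ⟨(ShortComplex.Splitting.ofExactOfRetraction _ hSE.exact (u'' ≫ z) hir hSE.epi_g).s,
    (ShortComplex.Splitting.ofExactOfRetraction _ hSE.exact (u'' ≫ z) hir hSE.epi_g).s_g⟩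

/-- `Hom(-, 𝒴)`-exact sequences are `Hom(X, -)`-exact for `X ∈ 𝒳`. -/
lemma coeexact_lift (hbp : BalancedPair 𝒳 𝒴) (hadm : Admissible 𝒳 𝒴)
    {D W C : A} (i : D ⟶ W) (p : W ⟶ C) (w0 : i ≫ p = 0)
    (hSE : (ShortComplex.mk i p w0).ShortExact)
    (hext : ∀ ⦃Y : A⦄, Y ∈ 𝒴 → ∀ g : D ⟶ Y, ∃ h : W ⟶ Y, i ≫ h = g)
    {X : A} (hX : X ∈ 𝒳) (g : X ⟶ C) : ∃ h : X ⟶ W, h ≫ p = g := by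
  haveI := hSE.mono_f
  haveI := hSE.epi_g
  obtain ⟨X₀, hX₀, π, hπ⟩ := hbp.contravariantlyFinite C
  haveI : Epi π := hadm.1 hX₀ π hπ
  set i'' : D ⟶ pullback p π := pullback.lift i 0 (by rw [w0, zero_comp]) with hi''
  have w' : i'' ≫ pullback.snd p π = 0 := by rw [hi'', pullback.lift_snd]
  have hfst : i'' ≫ pullback.fst p π = i := by rw [hi'', pullback.lift_fst]
  haveI : Mono i'' := mono_of_mono_fac hfst
  haveI : Epi (pullback.snd p π) := inferInstance
  have hexact : (ShortComplex.mk i'' (pullback.snd p π) w').Exact := by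
    apply ShortComplex.exact_of_f_is_kernel
    exact KernelFork.IsLimit.ofι' _ _ (fun {T} t ht =>
      ⟨hSE.exact.lift (t ≫ pullback.fst p π)
          (by rw [assoc, pullback.condition, ← assoc, ht, zero_comp]),
        by
          apply pullback.hom_ext
          · rw [assoc, hfst, hSE.exact.lift_f]
          · rw [assoc, w', comp_zero, ht]⟩)
  have hSE' : (ShortComplex.mk i'' (pullback.snd p π) w').ShortExact := ⟨hexact⟩
  obtain ⟨s, hs⟩ := splitting_of_X hbp hadm hX₀ i'' (pullback.snd p π) w' hSE'
    (fun Y hY g' => by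
      obtain ⟨h, hh⟩ := hext hY g'
      exact ⟨pullback.fst p π ≫ h, by rw [← assoc, hfst, hh]⟩)
  obtain ⟨g', hg'⟩ := hπ hX g
  refine ⟨g' ≫ s ≫ pullback.fst p π, ?_⟩
  rw [assoc, assoc, pullback.condition, ← assoc (s), hs, id_comp, hg']

/-- Left `𝒴`-acyclic implies right `𝒳`-acyclic. -/
lemma rightAcyclic_of_leftAcyclic (hbp : BalancedPair 𝒳 𝒴) (hadm : Admissible 𝒳 𝒴)
    {K : Cx A} (hK : LeftAcyclic 𝒴 K) : RightAcyclic 𝒳 K := by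
  intro n X hX g hg
  obtain ⟨w1, hSE1, hext1⟩ := co_ses hbp hadm hK (n+2) (n+1) n (by omega) (by omega)
  haveI hmono := mono_cokernelDesc hbp hadm hK (n+1) n (n-1) (by omega) rfl
  have hgπ : g ≫ cokernel.π (K.d (n+1) n) = 0 := by
    rw [← cancel_mono (cokernel.desc (K.d (n+1) n) (K.d n (n-1)) (K.d_comp_d _ _ _)),
      assoc, cokernel.π_desc, hg, zero_comp]
  haveI := hSE1.mono_f
  set gbar := hSE1.exact.lift g hgπ with hgbar
  have hgbarf : gbar ≫ cokernel.desc (K.d (n+2) (n+1)) (K.d (n+1) n) (K.d_comp_d _ _ _) = g :=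
    hSE1.exact.lift_f _ _
  obtain ⟨w2, hSE2, hext2⟩ := co_ses hbp hadm hK (n+3) (n+2) (n+1) (by omega) (by omega)
  obtain ⟨h, hh⟩ := coeexact_lift hbp hadm _ _ w2 hSE2 hext2 hX gbar
  refine ⟨h, ?_⟩
  have hd : K.d (n+1) n = cokernel.π (K.d (n+2) (n+1)) ≫
      cokernel.desc (K.d (n+2) (n+1)) (K.d (n+1) n) (K.d_comp_d _ _ _) :=
    (cokernel.π_desc _ _ _).symm
  rw [hd, ← assoc, hh, hgbarf]

/-- The colimit of a direct system in `Ch(A, E)` with admissible monic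
transition maps and all terms in `(E-dw X̃)^⊥` is right `𝒳`-acyclic. -/
theorem stmt_17 {A : Type u} [Category.{v} A] [Abelian A] [HasLimits A] [HasColimits A]
    (𝒳 𝒴 : Set A) (hbp : BalancedPair 𝒳 𝒴) (hadm : Admissible 𝒳 𝒴)
    (F : ℕ ⥤ Cx A)
    (hmono : ∀ i : ℕ, ∃ (Q : Cx A) (q : F.obj (i + 1) ⟶ Q),
      ChEExact 𝒳 (F.map (homOfLE (Nat.le_succ i))) q)
    (hperp : ∀ i : ℕ, F.obj i ∈ dwPerp 𝒳) :
    RightAcyclic 𝒳 (colimit F) := by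
  -- each `F.obj i` is left `𝒴`-acyclic
  have hL : ∀ i : ℕ, LeftAcyclic 𝒴 (F.obj i) := fun i =>
    leftAcyclic_of_rightAcyclic hbp hadm (rightAcyclic_of_mem_dwPerp hbp (hperp i))
  -- extension of maps into `𝒴` along the transition maps
  have hExt : ∀ (i : ℕ) (m : ℤ) ⦃Y : A⦄, Y ∈ 𝒴 → ∀ g : (F.obj i).X m ⟶ Y,
      ∃ h : (F.obj (i + 1)).X m ⟶ Y, (F.map (homOfLE (Nat.le_succ i))).f m ≫ h = g := by
    intro i m Y hY g
    obtain ⟨Q, q, hq⟩ := hmono i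
    exact eexact_extend hbp hadm (hq m) hY g
  apply rightAcyclic_of_leftAcyclic hbp hadm
  intro n Y hY g hg
  obtain ⟨t, ht⟩ : ∃ t : ∀ i : ℕ, F.obj i ⟶ F.obj (i + 1),
      t = fun i => F.map (homOfLE (Nat.le_succ i)) := ⟨_, rfl⟩
  set gi : ∀ i : ℕ, (F.obj i).X n ⟶ Y := fun i => (colimit.ι F i).f n ≫ g with hgi
  have hgiz : ∀ i, (F.obj i).d (n + 1) n ≫ gi i = 0 := by
    intro i
    rw [hgi]
    dsimp only
    rw [← assoc, ← (colimit.ι F i).comm (n + 1) n, assoc, hg, comp_zero]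
  have hti : ∀ i : ℕ, t i = F.map (homOfLE (Nat.le_succ i)) := fun i => by rw [ht]
  have hwf : ∀ (i : ℕ) (m : ℤ), (t i).f m ≫ (colimit.ι F (i + 1)).f m = (colimit.ι F i).f m := by
    intro i m
    have h1 := congr_arg (fun φ => HomologicalComplex.Hom.f φ m)
      (colimit.w F (homOfLE (Nat.le_succ i)))
    simp only [HomologicalComplex.comp_f] at h1
    rw [hti i]
    exact h1
  have hcompat0 : ∀ i : ℕ, (t i).f n ≫ gi (i + 1) = gi i := by
    intro i
    rw [hgi]
    dsimp only
    rw [← assoc, hwf i n]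
  -- the inductive correction step (Mittag-Leffler)
  have step : ∀ (i : ℕ) (h : (F.obj i).X (n - 1) ⟶ Y), (F.obj i).d n (n - 1) ≫ h = gi i →
      ∃ h' : (F.obj (i + 1)).X (n - 1) ⟶ Y,
        (F.obj (i + 1)).d n (n - 1) ≫ h' = gi (i + 1) ∧ (t i).f (n - 1) ≫ h' = h := by
    intro i h hip
    obtain ⟨h1, hh1⟩ := (hL (i + 1)).at' rfl rfl hY (gi (i + 1)) (hgiz (i + 1))
    have hδz : (F.obj i).d n (n - 1) ≫ ((t i).f (n - 1) ≫ h1 - h) = 0 := by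
      rw [Preadditive.comp_sub, hip, ← assoc, ← (t i).comm n (n - 1), assoc, hh1,
        hcompat0 i, sub_self]
    obtain ⟨k, hk⟩ := (hL i).at' (show n = (n - 1) + 1 by omega) rfl hY
      ((t i).f (n - 1) ≫ h1 - h) hδz
    obtain ⟨k', hk'⟩ := hExt i (n - 1 - 1) hY k
    rw [← hti i] at hk'
    refine ⟨h1 - (F.obj (i + 1)).d (n - 1) (n - 1 - 1) ≫ k', ?_, ?_⟩
    · rw [Preadditive.comp_sub, hh1, ← assoc, (F.obj (i + 1)).d_comp_d, zero_comp, sub_zero]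
    · rw [Preadditive.comp_sub, ← assoc, (t i).comm (n - 1) (n - 1 - 1), assoc, hk', hk,
        sub_sub_cancel]
  -- build the compatible family by recursion
  obtain ⟨h0, hh0⟩ := (hL 0).at' rfl rfl hY (gi 0) (hgiz 0)
  let Hs : ∀ i : ℕ, {h : (F.obj i).X (n - 1) ⟶ Y // (F.obj i).d n (n - 1) ≫ h = gi i} :=
    fun i => Nat.rec ⟨h0, hh0⟩
      (fun j p => ⟨(step j p.1 p.2).choose, (step j p.1 p.2).choose_spec.1⟩) i
  have hcomp : ∀ i : ℕ, (t i).f (n - 1) ≫ (Hs (i + 1)).1 = (Hs i).1 :=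
    fun i => (step i (Hs i).1 (Hs i).2).choose_spec.2
  have hcompat : ∀ (i j : ℕ) (hij : i ≤ j),
      (F.map (homOfLE hij)).f (n - 1) ≫ (Hs j).1 = (Hs i).1 := by
    intro i j hij
    induction j, hij using Nat.le_induction with
    | base =>
        have h2 : F.map (homOfLE (le_refl i)) = 𝟙 (F.obj i) := F.map_id i
        rw [h2]
        simp
    | succ j h1 ih =>
        have key : F.map (homOfLE (h1.trans (Nat.le_succ j))) = F.map (homOfLE h1) ≫ t j := by
          rw [hti j, ← F.map_comp, homOfLE_comp]
        have h3 : (F.map (homOfLE h1) ≫ t j).f (n - 1) ≫ (Hs (j + 1)).1 = (Hs i).1 := by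
          rw [HomologicalComplex.comp_f, assoc, hcomp j, ih]
        rw [← key] at h3
        exact h3
  -- the induced map out of the colimit
  let coc : Cocone (F ⋙ HomologicalComplex.eval A (ComplexShape.down ℤ) (n - 1)) :=
    { pt := Y
      ι :=
        { app := fun i => (Hs i).1
          naturality := fun i j f => by
            dsimp
            refine Eq.trans ?_ (comp_id _).symm
            exact hcompat i j (leOfHom f) } }
  refine ⟨(preservesColimitIso (HomologicalComplex.eval A (ComplexShape.down ℤ) (n - 1)) F).hom ≫
    colimit.desc (F ⋙ HomologicalComplex.eval A (ComplexShape.down ℤ) (n - 1)) coc, ?_⟩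
  refine (cancel_epi (preservesColimitIso (HomologicalComplex.eval A (ComplexShape.down ℤ) n) F).inv).1 ?_
  apply colimit.hom_ext
  intro j
  erw [← assoc]
  rw [ι_preservesColimitIso_inv (HomologicalComplex.eval A (ComplexShape.down ℤ) n) F j]
  have hev : (HomologicalComplex.eval A (ComplexShape.down ℤ) n).map (colimit.ι F j)
      = (colimit.ι F j).f n := rfl
  rw [hev]
  have hcomm : (colimit.ι F j).f n ≫ (colimit F).d n (n - 1)
      = (F.obj j).d n (n - 1) ≫ (colimit.ι F j).f (n - 1) := (colimit.ι F j).comm n (n - 1)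
  erw [← assoc, hcomm]
  erw [assoc]
  have h5 : (colimit.ι F j).f (n - 1)
      ≫ (preservesColimitIso (HomologicalComplex.eval A (ComplexShape.down ℤ) (n - 1)) F).hom
      = colimit.ι (F ⋙ HomologicalComplex.eval A (ComplexShape.down ℤ) (n - 1)) j :=
    ι_preservesColimitIso_hom (HomologicalComplex.eval A (ComplexShape.down ℤ) (n - 1)) F j
  erw [← assoc ((colimit.ι F j).f (n - 1)), h5, colimit.ι_desc]
  have h6 : coc.ι.app j = (Hs j).1 := rfl
  erw [h6, (Hs j).2, hgi]
  erw [← assoc, ι_preservesColimitIso_inv (HomologicalComplex.eval A (ComplexShape.down ℤ) n) F j]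
  rfl

end Paper
end
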